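/- Let H be a complex Hilbert space, let S₀ be a linear operator on H, let a be a bounded multiplication-type (linear) operator on H, and for μ ∈ ℝ let S_μ := S₀ + μ·a. Fix α > 0 and define the block operator A_α on H × H by A_α(ψ₁, ψ₂) = (ψ₂, -S₀ψ₁ - α·a·ψ₂). Then for every μ ∈ ℝ, the number -(μ/α)² is an eigenvalue of S_μ if and only if μ/α is an eigenvalue of A_α. -/
import Mathlib


/-- `-(μ/α)²` is an eigenvalue of `S_μ = S₀ + μ a` iff `μ/α` is an
eigenvalue of the block damped-wave operator `A_α (ψ₁,ψ₂) = (ψ₂, -S₀ψ₁ - α a ψ₂)`. -/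
theorem stmt0 {H : Type*} [NormedAddCommGroup H] [InnerProductSpace ℂ H]
    (S₀ : H →ₗ[ℂ] H) (a : H →L[ℂ] H) (α μ : ℝ) (hα : 0 < α) :
    (∃ ψ : H, ψ ≠ 0 ∧ S₀ ψ + (μ : ℂ) • a ψ = (-((μ / α : ℝ) ^ 2) : ℂ) • ψ) ↔
    (∃ Ψ : H × H, Ψ ≠ 0 ∧
      (Ψ.2, -S₀ Ψ.1 - (α : ℂ) • a Ψ.2) = ((μ / α : ℝ) : ℂ) • Ψ) := by
  have hα' : (α : ℂ) ≠ 0 := by exact_mod_cast hα.ne'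
  have hμ : (α : ℂ) * ((μ / α : ℝ) : ℂ) = (μ : ℂ) := by
    push_cast
    field_simp
  set l : ℂ := ((μ / α : ℝ) : ℂ) with hl
  constructor
  · rintro ⟨ψ, hψ, heq⟩
    refine ⟨(ψ, l • ψ), ?_, ?_⟩
    · simp [Prod.ext_iff, hψ]
    · refine Prod.ext ?_ ?_
      · simp [Prod.smul_fst]
      · simp only [Prod.smul_snd]
        rw [smul_smul, map_smul, smul_smul, hμ]
        have : l * l = -(-((μ / α : ℝ) ^ 2) : ℂ) := by
          push_cast [hl]; ring
        rw [this, neg_smul, ← heq]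
        abel
  · rintro ⟨⟨ψ₁, ψ₂⟩, hΨ, heq⟩
    rw [Prod.ext_iff] at heq
    obtain ⟨h1, h2⟩ := heq
    simp only [Prod.smul_fst, Prod.smul_snd] at h1 h2
    have hψ₁ : ψ₁ ≠ 0 := by
      rintro rfl
      apply hΨ
      have : ψ₂ = 0 := by simpa using h1
      simp [this]
    refine ⟨ψ₁, hψ₁, ?_⟩
    have hc : (-((μ / α : ℝ) ^ 2) : ℂ) = -(l * l) := by push_cast [hl]; ring
    rw [h1, map_smul, smul_smul, hμ] at h2
    rw [hc, neg_smul, ← smul_smul]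
    linear_combination (norm := abel) -h2
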